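/- Let T be a Steiner triple system on a finite set V with |V| = n > 1, and suppose that every spreading set U of T satisfies 2^{|U|} ≥ n + 1 (i.e., the smallest spreading set has size log₂(n+1)). Then there exist d ≥ 0 with n = 2^{d+1} − 1 and a bijection φ from V onto the nonzero vectors of (ZMod 2)^{d+1} such that a 3-element subset {x, y, z} of V is a triple of T if and only if φ(x) + φ(y) + φ(z) = 0; that is, T is isomorphic to the projective space PG(d,2). -/

import Mathlib

set_option linter.unusedSectionVars false
set_option linter.unusedVariables false


/-- A Steiner triple system on `V`: a family `T` of 3-element `Finset`s such that
every pair of distinct points lies in exactly one member of `T`. -/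
def IsSTS {V : Type*} (T : Set (Finset V)) : Prop :=
  (∀ t ∈ T, t.card = 3) ∧
    ∀ x y : V, x ≠ y → ∃! t : Finset V, t ∈ T ∧ x ∈ t ∧ y ∈ t

/-- `W` is closed w.r.t. the triple system `T`: whenever a triple of `T` contains two
points of `W`, all (in particular the third) of its points lie in `W`. -/
def StsClosed {V : Type*} (T : Set (Finset V)) (W : Set V) : Prop :=
  ∀ t ∈ T, ∀ x ∈ t, ∀ y ∈ t, x ≠ y → x ∈ W → y ∈ W → ∀ z ∈ t, z ∈ W

/-- The closure of `S` w.r.t. `T`: the smallest closed set containing `S`. -/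
def stsCl {V : Type*} (T : Set (Finset V)) (S : Set V) : Set V :=
  ⋂₀ {W : Set V | S ⊆ W ∧ StsClosed T W}

/-- `S` is a spreading set: its closure is the whole point set. -/
def IsSpreading {V : Type*} (T : Set (Finset V)) (S : Set V) : Prop :=
  stsCl T S = Set.univ

/-- `S` is a minimal spreading set: it is spreading but no proper subset is. -/
def IsMinSpreading {V : Type*} (T : Set (Finset V)) (S : Set V) : Prop :=
  IsSpreading T S ∧ ∀ S' : Set V, S' ⊂ S → ¬ IsSpreading T S'


section Aux
variable {V : Type*} [Fintype V] [DecidableEq V] {T : Set (Finset V)}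

theorem stsCl_subset_self {S : Set V} : S ⊆ stsCl T S :=
  fun x hx => Set.mem_sInter.2 fun _ hW => hW.1 hx

theorem stsClosed_stsCl {S : Set V} : StsClosed T (stsCl T S) := by
  intro t ht x hx y hy hxy hxW hyW z hz
  refine Set.mem_sInter.2 fun W hW => ?_
  exact hW.2 t ht x hx y hy hxy (hxW W hW) (hyW W hW) z hz

theorem stsCl_min {S W : Set V} (h1 : S ⊆ W) (h2 : StsClosed T W) : stsCl T S ⊆ W :=
  Set.sInter_subset_of_mem ⟨h1, h2⟩

theorem stsCl_mono {S S' : Set V} (h : S ⊆ S') : stsCl T S ⊆ stsCl T S' :=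
  stsCl_min (h.trans stsCl_subset_self) stsClosed_stsCl

theorem stsCl_closed_eq {W : Set V} (h : StsClosed T W) : stsCl T W = W :=
  Set.Subset.antisymm (stsCl_min subset_rfl h) stsCl_subset_self

theorem stsClosed_empty : StsClosed T (∅ : Set V) := by
  intro t ht x hx y hy hxy hxW; exact absurd hxW (by simp)

theorem stsCl_empty : stsCl T (∅ : Set V) = ∅ :=
  stsCl_closed_eq stsClosed_empty

theorem stsClosed_singleton {a : V} : StsClosed T ({a} : Set V) := by
  intro t ht x hx y hy hxy hxW hyW
  simp only [Set.mem_singleton_iff] at hxW hyW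
  exact absurd (hxW.trans hyW.symm) hxy

end Aux

section Mul
variable {V : Type*} [Fintype V] [DecidableEq V] {T : Set (Finset V)}

theorem triple_eq_of_mem (hT : IsSTS T) {t t' : Finset V} {x y : V} (hxy : x ≠ y)
    (ht : t ∈ T) (hx : x ∈ t) (hy : y ∈ t) (ht' : t' ∈ T) (hx' : x ∈ t') (hy' : y ∈ t') :
    t = t' := by
  obtain ⟨u, -, hu⟩ := hT.2 x y hxy
  rw [hu t ⟨ht, hx, hy⟩, hu t' ⟨ht', hx', hy'⟩]

theorem exists_third (hT : IsSTS T) {x y : V} (hxy : x ≠ y) :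
    ∃ z : V, z ≠ x ∧ z ≠ y ∧ ({x, y, z} : Finset V) ∈ T := by
  obtain ⟨t, ⟨ht, hx, hy⟩, -⟩ := hT.2 x y hxy
  have hcard : t.card = 3 := hT.1 t ht
  have h2 : ((t.erase x).erase y).card = 1 := by
    rw [Finset.card_erase_of_mem (Finset.mem_erase.2 ⟨hxy.symm, hy⟩),
      Finset.card_erase_of_mem hx, hcard]
  obtain ⟨z, hz⟩ := Finset.card_eq_one.1 h2
  have hzm : z ∈ (t.erase x).erase y := hz ▸ Finset.mem_singleton_self z
  have hzy : z ≠ y := (Finset.mem_erase.1 hzm).1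
  have hzx : z ≠ x := (Finset.mem_erase.1 (Finset.mem_erase.1 hzm).2).1
  have hzt : z ∈ t := Finset.mem_of_mem_erase (Finset.mem_of_mem_erase hzm)
  refine ⟨z, hzx, hzy, ?_⟩
  have hsub : ({x, y, z} : Finset V) ⊆ t := by
    intro w hw
    simp only [Finset.mem_insert, Finset.mem_singleton] at hw
    rcases hw with rfl | rfl | rfl <;> assumption
  have hc3 : ({x, y, z} : Finset V).card = 3 := by
    rw [Finset.card_insert_of_notMem (by simp [hxy, hzx.symm]),
      Finset.card_insert_of_notMem (by simp [hzy.symm])]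
    simp
  have : ({x, y, z} : Finset V) = t :=
    Finset.eq_of_subset_of_card_le hsub (by rw [hcard, hc3])
  rwa [this]

/-- The third point of the triple through two distinct points. -/
noncomputable def stsMul (hT : IsSTS T) (x y : V) : V :=
  if h : x ≠ y then (exists_third hT h).choose else x

theorem stsMul_spec (hT : IsSTS T) {x y : V} (h : x ≠ y) :
    stsMul hT x y ≠ x ∧ stsMul hT x y ≠ y ∧ ({x, y, stsMul hT x y} : Finset V) ∈ T := by
  rw [stsMul, dif_pos h]; exact (exists_third hT h).choose_spec

theorem stsMul_ne_left (hT : IsSTS T) {x y : V} (h : x ≠ y) : stsMul hT x y ≠ x :=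
  (stsMul_spec hT h).1

theorem stsMul_ne_right (hT : IsSTS T) {x y : V} (h : x ≠ y) : stsMul hT x y ≠ y :=
  (stsMul_spec hT h).2.1

theorem stsMul_mem (hT : IsSTS T) {x y : V} (h : x ≠ y) :
    ({x, y, stsMul hT x y} : Finset V) ∈ T := (stsMul_spec hT h).2.2

theorem stsMul_eq_of_mem (hT : IsSTS T) {x y z : V} (hxy : x ≠ y) (hzx : z ≠ x) (hzy : z ≠ y)
    (hm : ({x, y, z} : Finset V) ∈ T) : stsMul hT x y = z := by
  have := triple_eq_of_mem hT hxy (stsMul_mem hT hxy) (by simp) (by simp) hm (by simp) (by simp)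
  have hz : z ∈ ({x, y, stsMul hT x y} : Finset V) := this ▸ (by simp : z ∈ ({x,y,z} : Finset V))
  simp only [Finset.mem_insert, Finset.mem_singleton] at hz
  rcases hz with rfl | rfl | rfl
  · exact absurd rfl hzx
  · exact absurd rfl hzy
  · rfl

theorem stsMul_comm (hT : IsSTS T) {x y : V} (h : x ≠ y) : stsMul hT x y = stsMul hT y x := by
  refine (stsMul_eq_of_mem hT h.symm (stsMul_ne_right hT h) (stsMul_ne_left hT h) ?_).symm
  have : ({y, x, stsMul hT x y} : Finset V) = {x, y, stsMul hT x y} := by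
    ext w; simp; tauto
  rw [this]; exact stsMul_mem hT h

theorem stsMul_mul (hT : IsSTS T) {x y : V} (h : x ≠ y) : stsMul hT x (stsMul hT x y) = y := by
  refine stsMul_eq_of_mem hT (stsMul_ne_left hT h).symm h.symm (stsMul_ne_right hT h).symm ?_
  have : ({x, stsMul hT x y, y} : Finset V) = {x, y, stsMul hT x y} := by
    ext w; simp; tauto
  rw [this]; exact stsMul_mem hT h

theorem stsMul_mem_closed (hT : IsSTS T) {W : Set V} (hW : StsClosed T W) {x y : V}
    (h : x ≠ y) (hx : x ∈ W) (hy : y ∈ W) : stsMul hT x y ∈ W :=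
  hW _ (stsMul_mem hT h) x (by simp) y (by simp) h hx hy _ (by simp)

end Mul

section Count
variable {V : Type*} [Fintype V] [DecidableEq V] {T : Set (Finset V)}

theorem double_set (hT : IsSTS T) {W : Set V} (hW : StsClosed T W) {x : V} (hx : x ∉ W) :
    (insert x (W ∪ stsMul hT x '' W)).ncard = 2 * W.ncard + 1 ∧
      insert x (W ∪ stsMul hT x '' W) ⊆ stsCl T (insert x W) := by
  set f := stsMul hT x with hf
  have hne : ∀ w ∈ W, x ≠ w := fun w hw => fun e => hx (e ▸ hw)
  have himW : ∀ w ∈ W, f w ∉ W := by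
    intro w hw hmem
    have hxw : x ≠ w := hne w hw
    have : x ∈ W := hW _ (stsMul_mem hT hxw) w (by simp) (f w) (by simp [hf])
      (stsMul_ne_right hT hxw).symm hw hmem x (by simp)
    exact hx this
  have himx : ∀ w ∈ W, f w ≠ x := fun w hw => stsMul_ne_left hT (hne w hw)
  have hinj : Set.InjOn f W := by
    intro w hw w' hw' he
    have := stsMul_mul hT (hne w hw)
    rw [hf] at *
    rw [he, stsMul_mul hT (hne w' hw')] at this
    exact this.symm
  constructor
  · have hxnot : x ∉ W ∪ f '' W := by
      rintro (hxx | ⟨w, hw, he⟩)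
      · exact hx hxx
      · exact himx w hw he
    rw [Set.ncard_insert_of_notMem hxnot,
      Set.ncard_union_eq (by
        rw [Set.disjoint_right]; rintro a ⟨w, hw, rfl⟩; exact himW w hw),
      Set.ncard_image_of_injOn hinj]
    ring
  · intro a ha
    have hWsub : W ⊆ stsCl T (insert x W) := (Set.subset_insert x W).trans stsCl_subset_self
    have hxmem : x ∈ stsCl T (insert x W) := stsCl_subset_self (Set.mem_insert x W)
    rcases ha with rfl | hWW | ⟨w, hw, rfl⟩
    · exact hxmem
    · exact hWsub hWW
    · exact stsMul_mem_closed hT stsClosed_stsCl (hne w hw) hxmem (hWsub hw)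

theorem stsCl_insert_cl (hT : IsSTS T) (S : Set V) (x : V) :
    stsCl T (insert x (stsCl T S)) = stsCl T (insert x S) := by
  apply Set.Subset.antisymm
  · refine stsCl_min ?_ stsClosed_stsCl
    intro a ha
    rcases ha with rfl | ha
    · exact stsCl_subset_self (Set.mem_insert a S)
    · exact stsCl_mono (Set.subset_insert x S) ha
  · exact stsCl_mono (Set.insert_subset_insert stsCl_subset_self)

theorem doubling (hT : IsSTS T) {S : Set V} {x : V} (hx : x ∉ stsCl T S) :
    2 * (stsCl T S).ncard + 1 ≤ (stsCl T (insert x S)).ncard := by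
  obtain ⟨hcard, hsub⟩ := double_set hT (stsClosed_stsCl (S := S)) hx
  rw [stsCl_insert_cl hT S x] at hsub
  rw [← hcard]
  exact Set.ncard_le_ncard hsub (Set.toFinite _)

theorem grow (hT : IsSTS T) {W : Set V} (hW : StsClosed T W) :
    ∀ (n : ℕ) (Y : Finset V), ↑Y ⊆ W → (W \ stsCl T ↑Y).ncard ≤ n →
      ∃ (Z : Finset V) (m : ℕ), ↑Z ⊆ W ∧ Z.card = Y.card + m ∧ stsCl T ↑Z = W ∧
        2 ^ m * ((stsCl T ↑Y).ncard + 1) ≤ W.ncard + 1 := by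
  intro n
  induction n with
  | zero =>
    intro Y hYW hle
    have hclW : stsCl T ↑Y ⊆ W := stsCl_min hYW hW
    have hdiff : W \ stsCl T ↑Y = ∅ := by
      rw [← Set.ncard_eq_zero (Set.toFinite _)]; omega
    have heq : stsCl T ↑Y = W :=
      Set.Subset.antisymm hclW (Set.diff_eq_empty.1 hdiff)
    exact ⟨Y, 0, hYW, rfl, heq, by simp [heq]⟩
  | succ n ih =>
    intro Y hYW hle
    have hclW : stsCl T ↑Y ⊆ W := stsCl_min hYW hW
    by_cases heq : stsCl T ↑Y = W
    · exact ⟨Y, 0, hYW, rfl, heq, by simp [heq]⟩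
    · obtain ⟨x, hxW, hxcl⟩ : ∃ x, x ∈ W ∧ x ∉ stsCl T ↑Y := by
        by_contra hcon
        push_neg at hcon
        exact heq (Set.Subset.antisymm hclW hcon)
      have hxY : x ∉ Y := fun hxy => hxcl (stsCl_subset_self hxy)
      have hcoe : ((insert x Y : Finset V) : Set V) = insert x (↑Y : Set V) := by
        simp
      have hsub2 : stsCl T ↑Y ⊆ stsCl T ↑(insert x Y) := by
        rw [hcoe]; exact stsCl_mono (Set.subset_insert x ↑Y)
      have hmeas : (W \ stsCl T ↑(insert x Y)).ncard ≤ n := by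
        have hss : W \ stsCl T ↑(insert x Y) ⊂ W \ stsCl T ↑Y := by
          refine ⟨Set.diff_subset_diff_right hsub2, fun hcon => ?_⟩
          have hxin : x ∈ W \ stsCl T ↑Y := ⟨hxW, hxcl⟩
          have := hcon hxin
          exact this.2 (by rw [hcoe]; exact stsCl_subset_self (Set.mem_insert x _))
        have := Set.ncard_lt_ncard hss (Set.toFinite _)
        omega
      obtain ⟨Z, m, hZW, hZcard, hZcl, hZle⟩ := ih (insert x Y)
        (by rw [hcoe]; exact Set.insert_subset hxW hYW) hmeas
      refine ⟨Z, m + 1, hZW, ?_, hZcl, ?_⟩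
      · rw [hZcard, Finset.card_insert_of_notMem hxY]; ring
      · have hdb : 2 * (stsCl T ↑Y).ncard + 1 ≤ (stsCl T ↑(insert x Y)).ncard := by
          have := doubling hT (S := (↑Y : Set V)) (x := x) hxcl
          rwa [← hcoe] at this
        calc 2 ^ (m + 1) * ((stsCl T ↑Y).ncard + 1)
            = 2 ^ m * (2 * (stsCl T ↑Y).ncard + 1 + 1) := by ring
          _ ≤ 2 ^ m * ((stsCl T ↑(insert x Y)).ncard + 1) := by
              apply Nat.mul_le_mul_left; omega
          _ ≤ W.ncard + 1 := hZle

end Count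

section Struct
variable {V : Type*} [Fintype V] [DecidableEq V] {T : Set (Finset V)}

variable (hT : IsSTS T)
  (hU : ∀ U : Finset V, IsSpreading T ↑U → Fintype.card V + 1 ≤ 2 ^ U.card)

include hT hU

theorem cl_card_le (S : Finset V) : (stsCl T ↑S).ncard + 1 ≤ 2 ^ S.card := by
  have hWcl : StsClosed T (Set.univ : Set V) := fun t ht x hx y hy hxy hxW hyW z hz => trivial
  obtain ⟨Z, m, hZW, hZcard, hZcl, hZle⟩ :=
    grow hT hWcl ((Set.univ \ stsCl T ↑S).ncard) S (Set.subset_univ _) le_rfl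
  have hsp : Fintype.card V + 1 ≤ 2 ^ Z.card := hU Z hZcl
  rw [Set.ncard_univ, Nat.card_eq_fintype_card] at hZle
  rw [hZcard, pow_add] at hsp
  have : 2 ^ m * ((stsCl T ↑S).ncard + 1) ≤ 2 ^ S.card * 2 ^ m :=
    le_trans hZle hsp
  rw [mul_comm (2 ^ S.card)] at this
  exact Nat.le_of_mul_le_mul_left this (Nat.pow_pos (by norm_num))

theorem closed_card {W : Set V} (hW : StsClosed T W) :
    ∃ Y : Finset V, ↑Y ⊆ W ∧ stsCl T ↑Y = W ∧ W.ncard + 1 = 2 ^ Y.card := by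
  obtain ⟨Z, m, hZW, hZcard, hZcl, hZle⟩ :=
    grow hT hW ((W \ stsCl T (↑(∅ : Finset V))).ncard) ∅ (by simp) le_rfl
  simp only [Finset.coe_empty, stsCl_empty, Set.ncard_empty, Finset.card_empty, zero_add] at hZcard hZle
  refine ⟨Z, hZW, hZcl, ?_⟩
  have hle2 := cl_card_le hT hU Z
  rw [hZcl, hZcard] at hle2
  simp only [mul_one] at hZle
  rw [hZcard]
  omega

theorem closed_ext {W : Set V} (hW : StsClosed T W) {x : V} (hx : x ∉ W) :
    stsCl T (insert x W) = insert x (W ∪ stsMul hT x '' W) := by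
  obtain ⟨Y, hYW, hYcl, hYcard⟩ := closed_card hT hU hW
  obtain ⟨hcardA, hsubA⟩ := double_set hT hW hx
  have hxY : x ∉ Y := fun hxy => hx (hYW hxy)
  have hcoe : ((insert x Y : Finset V) : Set V) = insert x (↑Y : Set V) := by simp
  -- stsCl T (insert x W) = stsCl T ↑(insert x Y)
  have hkey : stsCl T (insert x W) = stsCl T ↑(insert x Y) := by
    rw [hcoe, ← stsCl_insert_cl hT (↑Y : Set V) x, hYcl]
  have hub : (stsCl T (insert x W)).ncard + 1 ≤ 2 ^ (Y.card + 1) := by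
    rw [hkey]
    have := cl_card_le hT hU (insert x Y)
    rwa [Finset.card_insert_of_notMem hxY] at this
  refine (Set.eq_of_subset_of_ncard_le hsubA ?_ (Set.toFinite _)).symm
  rw [hcardA]
  have : 2 * W.ncard + 2 = 2 ^ (Y.card + 1) := by rw [pow_succ]; omega
  omega

end Struct

section Assoc
variable {V : Type*} [Fintype V] [DecidableEq V] {T : Set (Finset V)}

theorem stsMul_mul' (hT : IsSTS T) {a b : V} (hab : a ≠ b) :
    stsMul hT b (stsMul hT a b) = a := by
  rw [stsMul_comm hT hab]; exact stsMul_mul hT hab.symm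

theorem stsClosed_pair (hT : IsSTS T) {a b : V} (hab : a ≠ b) :
    StsClosed T ({a, b, stsMul hT a b} : Set V) := by
  set c := stsMul hT a b with hc
  have hmemT : ({a, b, c} : Finset V) ∈ T := stsMul_mem hT hab
  intro t ht x hx y hy hxy hxW hyW z hz
  have hxF : x ∈ ({a, b, c} : Finset V) := by
    simp only [Set.mem_insert_iff, Set.mem_singleton_iff] at hxW
    simp only [Finset.mem_insert, Finset.mem_singleton]; exact hxW
  have hyF : y ∈ ({a, b, c} : Finset V) := by
    simp only [Set.mem_insert_iff, Set.mem_singleton_iff] at hyW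
    simp only [Finset.mem_insert, Finset.mem_singleton]; exact hyW
  have heq : t = ({a, b, c} : Finset V) :=
    triple_eq_of_mem hT hxy ht hx hy hmemT hxF hyF
  rw [heq] at hz
  simp only [Finset.mem_insert, Finset.mem_singleton] at hz
  simp only [Set.mem_insert_iff, Set.mem_singleton_iff]
  exact hz

theorem stsCl_pair (hT : IsSTS T) {a b : V} (hab : a ≠ b) :
    stsCl T {a, b} = ({a, b, stsMul hT a b} : Set V) := by
  apply Set.Subset.antisymm
  · refine stsCl_min ?_ (stsClosed_pair hT hab)
    intro w hw
    rcases hw with rfl | hw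
    · exact Set.mem_insert w _
    · simp only [Set.mem_singleton_iff] at hw
      subst hw; simp
  · intro w hw
    have ha : a ∈ stsCl T ({a, b} : Set V) := stsCl_subset_self (by simp)
    have hb : b ∈ stsCl T ({a, b} : Set V) := stsCl_subset_self (by simp)
    rcases hw with rfl | rfl | hw
    · exact ha
    · exact hb
    · simp only [Set.mem_singleton_iff] at hw
      subst hw
      exact stsMul_mem_closed hT stsClosed_stsCl hab ha hb

variable (hT : IsSTS T)
  (hU : ∀ U : Finset V, IsSpreading T ↑U → Fintype.card V + 1 ≤ 2 ^ U.card)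

include hT hU

theorem assoc_core {a b c : V} (hab : a ≠ b) (hbc : b ≠ c) (hac : a ≠ c)
    (hcab : c ≠ stsMul hT a b) :
    stsMul hT a (stsMul hT b c) = stsMul hT (stsMul hT a b) c := by
  set ab := stsMul hT a b with hab'
  set bc := stsMul hT b c with hbc'
  set W : Set V := {a, b, ab} with hWdef
  have hWclosed : StsClosed T W := stsClosed_pair hT hab
  have hcW : c ∉ W := by
    simp only [hWdef, Set.mem_insert_iff, Set.mem_singleton_iff]
    push_neg
    exact ⟨fun e => hac e.symm, fun e => hbc e.symm, hcab⟩
  have hCeq : stsCl T (insert c W) = insert c (W ∪ stsMul hT c '' W) :=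
    closed_ext hT hU hWclosed hcW
  have hCclosed : StsClosed T (insert c (W ∪ stsMul hT c '' W)) := by
    rw [← hCeq]; exact stsClosed_stsCl
  set C := insert c (W ∪ stsMul hT c '' W) with hCdef
  have haC : a ∈ C := by simp [hCdef, hWdef]
  have hbC : b ∈ C := by simp [hCdef, hWdef]
  have hcC : c ∈ C := by simp [hCdef]
  have hbcC : bc ∈ C := stsMul_mem_closed hT hCclosed hbc hbC hcC
  have hbc_ne_a : bc ≠ a := by
    intro he
    have h1 := stsMul_mul hT hbc
    rw [← hbc', he, ← stsMul_comm hT hab] at h1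
    exact hcab h1.symm
  have habc : a ≠ bc := fun e => hbc_ne_a e.symm
  set p := stsMul hT a bc with hp'
  have hpC : p ∈ C := stsMul_mem_closed hT hCclosed habc haC hbcC
  have hpT : ({a, bc, p} : Finset V) ∈ T := stsMul_mem hT habc
  have hpa : p ≠ a := stsMul_ne_left hT habc
  have hpbc : p ≠ bc := stsMul_ne_right hT habc
  have hbcb : bc ≠ b := stsMul_ne_left hT hbc
  have hbcc : bc ≠ c := stsMul_ne_right hT hbc
  have hbcab : bc ≠ ab := by
    intro he
    have h1 : stsMul hT b bc = c := stsMul_mul hT hbc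
    rw [he, hab', stsMul_mul' hT hab] at h1
    exact hac h1
  have himage : stsMul hT c '' W = {stsMul hT c a, stsMul hT c b, stsMul hT c ab} := by
    simp [hWdef, Set.image_insert_eq]
  rw [hCdef, himage, hWdef] at hpC
  simp only [Set.mem_insert_iff, Set.mem_union, Set.mem_singleton_iff] at hpC
  rcases hpC with he | (he | he | he) | he | he | hfinal
  · -- p = c
    exfalso
    rw [he] at hpT
    have ht2 : ({b, c, bc} : Finset V) ∈ T := stsMul_mem hT hbc
    have heq : ({a, bc, c} : Finset V) = ({b, c, bc} : Finset V) :=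
      triple_eq_of_mem hT hbcc hpT (by simp) (by simp) ht2 (by simp) (by simp)
    have : a ∈ ({b, c, bc} : Finset V) := heq ▸ (by simp : a ∈ ({a, bc, c} : Finset V))
    simp only [Finset.mem_insert, Finset.mem_singleton] at this
    rcases this with rfl | rfl | rfl
    · exact hab rfl
    · exact hac rfl
    · exact hbc_ne_a rfl
  · exact absurd he hpa
  · -- p = b
    exfalso
    rw [he] at hpT
    have heq : ({a, bc, b} : Finset V) = ({a, b, ab} : Finset V) :=
      triple_eq_of_mem hT hab hpT (by simp) (by simp) (stsMul_mem hT hab) (by simp) (by simp)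
    have : bc ∈ ({a, b, ab} : Finset V) := heq ▸ (by simp : bc ∈ ({a, bc, b} : Finset V))
    simp only [Finset.mem_insert, Finset.mem_singleton] at this
    rcases this with h2 | h2 | h2
    · exact hbc_ne_a h2
    · exact hbcb h2
    · exact hbcab h2
  · -- p = ab
    exfalso
    rw [he] at hpT
    have hab_ne : a ≠ ab := (stsMul_ne_left hT hab).symm
    have heq : ({a, bc, ab} : Finset V) = ({a, b, ab} : Finset V) :=
      triple_eq_of_mem hT hab_ne hpT (by simp) (by simp) (stsMul_mem hT hab) (by simp) (by simp)
    have : bc ∈ ({a, b, ab} : Finset V) := heq ▸ (by simp : bc ∈ ({a, bc, ab} : Finset V))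
    simp only [Finset.mem_insert, Finset.mem_singleton] at this
    rcases this with h2 | h2 | h2
    · exact hbc_ne_a h2
    · exact hbcb h2
    · exact hbcab h2
  · -- p = stsMul c a
    exfalso
    rw [he] at hpT
    have hca : c ≠ a := fun e => hac e.symm
    have hane : a ≠ stsMul hT c a := (stsMul_ne_right hT hca).symm
    have heq : ({a, bc, stsMul hT c a} : Finset V) = ({c, a, stsMul hT c a} : Finset V) :=
      triple_eq_of_mem hT hane hpT (by simp) (by simp) (stsMul_mem hT hca) (by simp) (by simp)
    have : bc ∈ ({c, a, stsMul hT c a} : Finset V) :=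
      heq ▸ (by simp : bc ∈ ({a, bc, stsMul hT c a} : Finset V))
    simp only [Finset.mem_insert, Finset.mem_singleton] at this
    rcases this with h2 | h2 | h2
    · exact hbcc h2
    · exact hbc_ne_a h2
    · -- bc = stsMul c a
      have h1 : stsMul hT c bc = a := by rw [h2]; exact stsMul_mul hT hca
      have h3 : stsMul hT c bc = b := by
        rw [hbc', stsMul_comm hT hbc]
        exact stsMul_mul hT (fun e => hbc e.symm)
      exact hab (h1.symm.trans h3)
  · -- p = stsMul c b = bc
    exact absurd (he.trans (stsMul_comm hT hbc).symm) hpbc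
  · -- p = stsMul c ab : the desired conclusion
    rw [hfinal]
    exact stsMul_comm hT hcab

end Assoc

section Group
variable {V : Type*} [Fintype V] [DecidableEq V] {T : Set (Finset V)}

/-- Addition on `Option V`: `none` is zero, `some a + some a = none`,
and `some a + some b` is the third point of the triple through `a` and `b`. -/
noncomputable def optAdd (hT : IsSTS T) : Option V → Option V → Option V
  | none, y => y
  | some a, none => some a
  | some a, some b => if a = b then none else some (stsMul hT a b)

@[simp] theorem optAdd_none_left (hT : IsSTS T) (y : Option V) : optAdd hT none y = y := rfl

@[simp] theorem optAdd_none_right (hT : IsSTS T) (x : Option V) : optAdd hT x none = x := by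
  cases x <;> rfl

theorem optAdd_some_some (hT : IsSTS T) (a b : V) :
    optAdd hT (some a) (some b) = if a = b then none else some (stsMul hT a b) := rfl

@[simp] theorem optAdd_self (hT : IsSTS T) (x : Option V) : optAdd hT x x = none := by
  cases x with
  | none => rfl
  | some a => rw [optAdd_some_some, if_pos rfl]

theorem optAdd_some_ne (hT : IsSTS T) {a b : V} (h : a ≠ b) :
    optAdd hT (some a) (some b) = some (stsMul hT a b) := by
  rw [optAdd_some_some, if_neg h]

theorem optAdd_comm (hT : IsSTS T) (x y : Option V) : optAdd hT x y = optAdd hT y x := by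
  cases x with
  | none => simp
  | some a =>
    cases y with
    | none => simp
    | some b =>
      rcases eq_or_ne a b with rfl | hab
      · rfl
      · rw [optAdd_some_ne hT hab, optAdd_some_ne hT hab.symm, stsMul_comm hT hab]

theorem optAdd_assoc (hT : IsSTS T)
    (hU : ∀ U : Finset V, IsSpreading T ↑U → Fintype.card V + 1 ≤ 2 ^ U.card)
    (x y z : Option V) : optAdd hT (optAdd hT x y) z = optAdd hT x (optAdd hT y z) := by
  cases x with
  | none => simp
  | some a =>
  cases y with
  | none => simp
  | some b =>
  cases z with
  | none => simp
  | some c =>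
  rcases eq_or_ne a b with rfl | hab
  · -- a = b
    rw [optAdd_self, optAdd_none_left]
    rcases eq_or_ne a c with rfl | hac
    · rw [optAdd_self, optAdd_none_right]
    · rw [optAdd_some_ne hT hac, optAdd_some_ne hT (stsMul_ne_left hT hac).symm,
        stsMul_mul hT hac]
  rcases eq_or_ne b c with rfl | hbc
  · -- b = c
    rw [optAdd_self, optAdd_none_right, optAdd_some_ne hT hab,
      optAdd_some_ne hT (stsMul_ne_right hT hab),
      stsMul_comm hT (stsMul_ne_right hT hab), stsMul_mul' hT hab]
  rw [optAdd_some_ne hT hab, optAdd_some_ne hT hbc]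
  rcases eq_or_ne c (stsMul hT a b) with he | hcab
  · -- c = a*b
    subst he
    rw [stsMul_mul' hT hab, optAdd_self, optAdd_self]
  · have hacbc : a ≠ stsMul hT b c := by
      intro he
      apply hcab
      rw [he] at hab ⊢
      rw [stsMul_comm hT hab, stsMul_mul hT hbc]
    rcases eq_or_ne a c with he | hac
    · -- a = c
      subst he
      rw [← stsMul_comm hT hab, optAdd_comm hT]
    · rw [optAdd_some_ne hT (fun e => hcab e.symm), optAdd_some_ne hT hacbc,
        assoc_core hT hU hab hbc hac hcab]

end Group

theorem elem2_equiv (G : Type*) [AddCommGroup G] [Fintype G] (h2 : ∀ x : G, x + x = 0) :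
    ∃ (k : ℕ) (e : G ≃+ (Fin k → ZMod 2)), Fintype.card G = 2 ^ k := by
  letI : Module (ZMod 2) G := AddCommGroup.zmodModule (by intro x; rw [two_nsmul, h2])
  refine ⟨Module.finrank (ZMod 2) G, (Module.finBasis (ZMod 2) G).equivFun.toAddEquiv, ?_⟩
  rw [Fintype.card_congr (Module.finBasis (ZMod 2) G).equivFun.toEquiv, Fintype.card_fun]
  simp [ZMod.card]

/-- If every spreading set `U` of a Steiner triple system on `n > 1` points satisfies
`2 ^ |U| ≥ n + 1` (i.e. the smallest spreading set has size `log₂ (n + 1)`), then the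
system is isomorphic to `PG(d,2)` for some `d`: there is a bijection `φ` of the point
set with the nonzero vectors of `(ZMod 2)^(d+1)` (so `n = 2^(d+1) - 1`) carrying the
triples exactly to the 3-element sets of nonzero vectors summing to zero. -/
theorem sts_isomorphic_pg_of_min_spreading_large {V : Type*} [Fintype V]
    [DecidableEq V] (T : Set (Finset V)) (hT : IsSTS T) (hn : 1 < Fintype.card V)
    (h : ∀ U : Finset V, IsSpreading T ↑U → Fintype.card V + 1 ≤ 2 ^ U.card) :
    ∃ (d : ℕ) (φ : V ≃ {x : Fin (d + 1) → ZMod 2 // x ≠ 0}),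
      Fintype.card V = 2 ^ (d + 1) - 1 ∧
      ∀ x y z : V, x ≠ y → y ≠ z → x ≠ z →
        (({x, y, z} : Finset V) ∈ T ↔
          (φ x : Fin (d + 1) → ZMod 2) + (φ y : Fin (d + 1) → ZMod 2)
            + (φ z : Fin (d + 1) → ZMod 2) = 0) := by
  letI : AddCommGroup (Option V) :=
    { add := optAdd hT
      zero := none
      neg := id
      add_assoc := optAdd_assoc hT h
      zero_add := optAdd_none_left hT
      add_zero := optAdd_none_right hT
      neg_add_cancel := fun x => optAdd_self hT x
      add_comm := optAdd_comm hT
      nsmul := @nsmulRec _ ⟨none⟩ ⟨optAdd hT⟩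
      zsmul := @zsmulRec _ ⟨none⟩ ⟨optAdd hT⟩ ⟨id⟩ (@nsmulRec _ ⟨none⟩ ⟨optAdd hT⟩) }
  have h2 : ∀ x : Option V, x + x = 0 := fun x => optAdd_self hT x
  obtain ⟨k, e, hcard⟩ := elem2_equiv (Option V) h2
  have hcardV : Fintype.card (Option V) = Fintype.card V + 1 := by
    rw [Fintype.card_option]
  have hk : k ≠ 0 := by
    intro h0
    rw [h0, pow_zero, hcardV] at hcard
    omega
  obtain ⟨d, rfl⟩ : ∃ d, k = d + 1 :=
    ⟨k - 1, (Nat.succ_pred_eq_of_pos (Nat.pos_of_ne_zero hk)).symm⟩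
  have e0 : e 0 = 0 := map_zero e
  have hsome0 : ∀ v : V, e (some v) ≠ 0 := by
    intro v h0
    have h1 : (some v : Option V) = 0 := e.injective (by rw [h0, e0])
    exact Option.some_ne_none v h1
  let φ : V ≃ {x : Fin (d + 1) → ZMod 2 // x ≠ 0} :=
    { toFun := fun v => ⟨e (some v), hsome0 v⟩
      invFun := fun w => (e.symm ↑w).get (by
        rw [← Option.ne_none_iff_isSome]
        intro hnone
        apply w.2
        have := congrArg e hnone
        rwa [AddEquiv.apply_symm_apply, show (none : Option V) = 0 from rfl, e0] at this)
      left_inv := fun v => by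
        simp only [AddEquiv.symm_apply_apply, Option.get_some]
      right_inv := fun w => by
        apply Subtype.ext
        show e (some _) = _
        rw [Option.some_get, AddEquiv.apply_symm_apply] }
  refine ⟨d, φ, ?_, ?_⟩
  · rw [hcardV] at hcard
    omega
  · intro x y z hxy hyz hxz
    have key : (({x, y, z} : Finset V) ∈ T) ↔ stsMul hT x y = z :=
      ⟨fun hm => stsMul_eq_of_mem hT hxy (Ne.symm hxz) (Ne.symm hyz) hm,
        fun he => he ▸ stsMul_mem hT hxy⟩
    have hsum : ((some x + some y + some z : Option V) = 0) ↔ stsMul hT x y = z := by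
      show optAdd hT (optAdd hT (some x) (some y)) (some z) = none ↔ _
      rw [optAdd_some_ne hT hxy, optAdd_some_some]
      constructor
      · intro hcond
        by_cases hc : stsMul hT x y = z
        · exact hc
        · rw [if_neg hc] at hcond
          exact absurd hcond (Option.some_ne_none _)
      · intro hc
        rw [if_pos hc]
    rw [key, ← hsum]
    have hφ : (φ x : Fin (d + 1) → ZMod 2) + (φ y : Fin (d + 1) → ZMod 2)
        + (φ z : Fin (d + 1) → ZMod 2) = e (some x + some y + some z) := by
      show e (some x) + e (some y) + e (some z) = _
      rw [map_add, map_add]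
    rw [hφ]
    constructor
    · intro h0
      rw [h0, e0]
    · intro h0
      apply e.injective
      rw [h0, e0]
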